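/- Let P_X be a pmf on 𝒳 = {0,…,m_x} with full support that is symmetric, i.e., P_X(x) = P_X(m_x − x) for all x ∈ 𝒳. Then the minimizer θ* of θ ↦ I(S − X; X) (with X ~ P_X and S ~ θ independent) over pmfs θ on 𝒮 = {0,…,m_s} is symmetric: θ*(s) = θ*(m_s − s) for all s ∈ 𝒮. -/

import Mathlib

open Finset
open scoped Classical

namespace SmartMeter

/-! ### Basic information measures for finitely supported distributions.
All entropies and mutual informations are in bits (base-2 logarithms). -/

/-- Probability that the random variable `Z` takes the value `z` under the pmf `p`. -/
noncomputable def pr {Ω α : Type*} [Fintype Ω] [DecidableEq α]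
    (p : Ω → ℝ) (Z : Ω → α) (z : α) : ℝ :=
  ∑ ω ∈ Finset.univ.filter (fun ω => Z ω = z), p ω

/-- Shannon entropy (in bits) of the random variable `Z` under the pmf `p`. -/
noncomputable def ent {Ω α : Type*} [Fintype Ω] [DecidableEq α]
    (p : Ω → ℝ) (Z : Ω → α) : ℝ :=
  -∑ z ∈ Finset.univ.image Z, pr p Z z * Real.logb 2 (pr p Z z)

/-- Mutual information `I(A; B)`. -/
noncomputable def mutInfo {Ω α β : Type*} [Fintype Ω] [DecidableEq α] [DecidableEq β]
    (p : Ω → ℝ) (A : Ω → α) (B : Ω → β) : ℝ :=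
  ent p A + ent p B - ent p (fun ω => (A ω, B ω))

/-- Conditional entropy `H(A | C)`. -/
noncomputable def condEnt {Ω α γ : Type*} [Fintype Ω] [DecidableEq α] [DecidableEq γ]
    (p : Ω → ℝ) (A : Ω → α) (C : Ω → γ) : ℝ :=
  ent p (fun ω => (A ω, C ω)) - ent p C

/-- Conditional mutual information `I(A; B | C)`. -/
noncomputable def condMutInfo {Ω α β γ : Type*} [Fintype Ω] [DecidableEq α] [DecidableEq β]
    [DecidableEq γ] (p : Ω → ℝ) (A : Ω → α) (B : Ω → β) (C : Ω → γ) : ℝ :=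
  ent p (fun ω => (A ω, C ω)) + ent p (fun ω => (B ω, C ω))
    - ent p (fun ω => (A ω, B ω, C ω)) - ent p C

/-- `p` is a probability mass function on the finite type `Ω`. -/
def IsPMF {Ω : Type*} [Fintype Ω] (p : Ω → ℝ) : Prop :=
  (∀ ω, 0 ≤ p ω) ∧ ∑ ω, p ω = 1

/-- Extension of a pmf on `{0, …, n}` to an integer-indexed function (zero out of range). -/
noncomputable def extZ {n : ℕ} (f : Fin (n + 1) → ℝ) (k : ℤ) : ℝ :=
  if h : 0 ≤ k ∧ k ≤ (n : ℤ) then f ⟨k.toNat, by omega⟩ else 0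

/-! ### The single-letter quantity `J*` -/

/-- `I(S - X; X)` for independent `X ~ PX` on `{0,…,mx}` and `S ~ θ` on `{0,…,ms}`. -/
noncomputable def iidMI (mx ms : ℕ) (PX : Fin (mx + 1) → ℝ) (θ : Fin (ms + 1) → ℝ) : ℝ :=
  mutInfo (fun ω : Fin (mx + 1) × Fin (ms + 1) => PX ω.1 * θ ω.2)
    (fun ω => ((ω.2 : ℕ) : ℤ) - ((ω.1 : ℕ) : ℤ)) (fun ω => ω.1)

/-- `J* = min over pmfs θ on 𝒮 of I(S - X; X)`. -/
noncomputable def Jstar (mx ms : ℕ) (PX : Fin (mx + 1) → ℝ) : ℝ :=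
  sInf {r : ℝ | ∃ θ : Fin (ms + 1) → ℝ, IsPMF θ ∧ iidMI mx ms PX θ = r}

/-! ### The structured policy `b*` -/

/-- `ξ(w) = Σ_{(x,s) : s - x = w} PX(x) θ(s)`, the pmf of `W = S - X`. -/
noncomputable def xiOf (mx ms : ℕ) (PX : Fin (mx + 1) → ℝ) (θ : Fin (ms + 1) → ℝ)
    (w : ℤ) : ℝ :=
  ∑ x : Fin (mx + 1), ∑ s : Fin (ms + 1),
    if ((s : ℕ) : ℤ) - ((x : ℕ) : ℤ) = w then PX x * θ s else 0

/-- The structured policy with respect to `(θ, ξ)`: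
`b(y|w) = PX(y) θ(y + w) / ξ(w)` for `y ∈ 𝒳 ∩ 𝒴₀(w)` (when `ξ(w) > 0`), else `0`. -/
noncomputable def bstar (mx my ms : ℕ) (PX : Fin (mx + 1) → ℝ) (θ : Fin (ms + 1) → ℝ)
    (w : ℤ) (y : Fin (my + 1)) : ℝ :=
  if xiOf mx ms PX θ w = 0 then 0
  else extZ PX ((y : ℕ) : ℤ) * extZ θ (((y : ℕ) : ℤ) + w) / xiOf mx ms PX θ w

/-! ### Trajectory spaces, policies and induced joint laws.
Time is indexed from `0`; `ω = (s₁, x, y)` records the initial battery state `S₁ = ω.1`,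
the demands `X_{t+1} = ω.2.1 t` and the outputs `Y_{t+1} = ω.2.2 t` for `t = 0, …, T-1`. -/

/-- Trajectories of horizon `T`. -/
abbrev Traj (mx my ms T : ℕ) :=
  Fin (ms + 1) × (Fin T → Fin (mx + 1)) × (Fin T → Fin (my + 1))

variable {mx my ms T : ℕ}

/-- Demand at (0-based) time `t`, as an integer (junk value `0` for `t ≥ T`). -/
def Xat (ω : Traj mx my ms T) (t : ℕ) : ℤ :=
  if h : t < T then ((ω.2.1 ⟨t, h⟩ : ℕ) : ℤ) else 0

/-- Output at (0-based) time `t`, as an integer (junk value `0` for `t ≥ T`). -/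
def Yat (ω : Traj mx my ms T) (t : ℕ) : ℤ :=
  if h : t < T then ((ω.2.2 ⟨t, h⟩ : ℕ) : ℤ) else 0

/-- Battery state at (0-based) time `t`: `S_{t+1} = S_t + Y_t - X_t`, `Sat ω 0 = S₁`. -/
def Sat (ω : Traj mx my ms T) (t : ℕ) : ℤ :=
  ((ω.1 : ℕ) : ℤ) + ∑ i ∈ Finset.range t, (Yat ω i - Xat ω i)

/-- `W_t = S_t - X_t`. -/
def Wat (ω : Traj mx my ms T) (t : ℕ) : ℤ := Sat ω t - Xat ω t

/-- A general causal (class `Q_A`) randomized battery policy: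
`q_t(y_t | x^t, s^t, y^{t-1})`; since `s^t` is determined by `(s₁, x^{t-1}, y^{t-1})`,
the policy is a function of `(x^t, s₁, y^{t-1})`. -/
def PolicyA (mx my ms : ℕ) : Type :=
  (t : ℕ) → (Fin (t + 1) → Fin (mx + 1)) → Fin (ms + 1) → (Fin t → Fin (my + 1)) →
    Fin (my + 1) → ℝ

/-- A class-`Q_B` policy: `q_t(y_t | x_t, s_t, y^{t-1})`. -/
def PolicyB (mx my ms : ℕ) : Type :=
  (t : ℕ) → Fin (mx + 1) → ℤ → (Fin t → Fin (my + 1)) → Fin (my + 1) → ℝ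

/-- The battery state `S_t` computed from `s₁` and the history `(x^t, y^{t-1})`. -/
def hstate {t : ℕ} (s1 : Fin (ms + 1)) (x : Fin (t + 1) → Fin (mx + 1))
    (y : Fin t → Fin (my + 1)) : ℤ :=
  ((s1 : ℕ) : ℤ) + ∑ i : Fin t, (((y i : ℕ) : ℤ) - ((x i.castSucc : ℕ) : ℤ))

/-- Each `q_t(· | x^t, s^t, y^{t-1})` is a pmf on `𝒴`. -/
def CondPMFA (q : PolicyA mx my ms) : Prop :=
  ∀ (t : ℕ) (x : Fin (t + 1) → Fin (mx + 1)) (s1 : Fin (ms + 1)) (y : Fin t → Fin (my + 1)),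
    (∀ yt, 0 ≤ q t x s1 y yt) ∧ ∑ yt, q t x s1 y yt = 1

/-- Feasibility of a class-`Q_A` policy: conditional pmfs supported on
`𝒴₀(s_t - x_t) = {y ∈ 𝒴 : s_t - x_t + y ∈ 𝒮}`. -/
def FeasibleA (q : PolicyA mx my ms) : Prop :=
  CondPMFA q ∧
  ∀ (t : ℕ) (x : Fin (t + 1) → Fin (mx + 1)) (s1 : Fin (ms + 1)) (y : Fin t → Fin (my + 1)),
    ∀ yt, q t x s1 y yt ≠ 0 →
      0 ≤ hstate s1 x y - ((x (Fin.last t) : ℕ) : ℤ) + ((yt : ℕ) : ℤ) ∧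
      hstate s1 x y - ((x (Fin.last t) : ℕ) : ℤ) + ((yt : ℕ) : ℤ) ≤ (ms : ℤ)

/-- Each `q_t(· | x_t, s_t, y^{t-1})` is a pmf on `𝒴`. -/
def CondPMFB (q : PolicyB mx my ms) : Prop :=
  ∀ (t : ℕ) (xt : Fin (mx + 1)) (s : ℤ) (y : Fin t → Fin (my + 1)),
    (∀ yt, 0 ≤ q t xt s y yt) ∧ ∑ yt, q t xt s y yt = 1

/-- Feasibility of a class-`Q_B` policy. -/
def FeasibleB (q : PolicyB mx my ms) : Prop :=
  CondPMFB q ∧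
  ∀ (t : ℕ) (xt : Fin (mx + 1)) (s : ℤ) (y : Fin t → Fin (my + 1)),
    0 ≤ s → s ≤ (ms : ℤ) →
    ∀ yt, q t xt s y yt ≠ 0 →
      0 ≤ s - ((xt : ℕ) : ℤ) + ((yt : ℕ) : ℤ) ∧
      s - ((xt : ℕ) : ℤ) + ((yt : ℕ) : ℤ) ≤ (ms : ℤ)

/-- The demand prefix `x^t = (x_0, …, x_t)` of a trajectory. -/
def prefX (ω : Traj mx my ms T) (t : Fin T) : Fin ((t : ℕ) + 1) → Fin (mx + 1) :=
  fun i => ω.2.1 ⟨(i : ℕ), lt_of_le_of_lt (Nat.lt_succ_iff.mp i.isLt) t.isLt⟩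

/-- The output prefix `y^{t-1} = (y_0, …, y_{t-1})` of a trajectory. -/
def prefY (ω : Traj mx my ms T) (t : Fin T) : Fin (t : ℕ) → Fin (my + 1) :=
  fun i => ω.2.2 ⟨(i : ℕ), i.isLt.trans t.isLt⟩

/-- Joint law on trajectories induced by i.i.d. demand `PX`, initial battery pmf `PS1`
(independent of the demand), and a class-`Q_A` policy `q`. -/
noncomputable def jointA (PS1 : Fin (ms + 1) → ℝ) (PX : Fin (mx + 1) → ℝ)
    (q : PolicyA mx my ms) (T : ℕ) (ω : Traj mx my ms T) : ℝ :=
  PS1 ω.1 * ∏ t : Fin T,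
    (PX (ω.2.1 t) * q (t : ℕ) (prefX ω t) ω.1 (prefY ω t) (ω.2.2 t))

/-- Weight of a demand trajectory under a Markov chain `(PX1, Qm)`. -/
noncomputable def markovWt (PX1 : Fin (mx + 1) → ℝ) (Qm : Fin (mx + 1) → Fin (mx + 1) → ℝ)
    {T : ℕ} (x : Fin T → Fin (mx + 1)) : ℝ :=
  ∏ t : Fin T,
    if _h : (t : ℕ) = 0 then PX1 (x t)
    else Qm (x ⟨(t : ℕ) - 1, lt_of_le_of_lt (Nat.sub_le _ _) t.isLt⟩) (x t)

/-- Joint law on trajectories induced by Markov demand and a class-`Q_A` policy. -/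
noncomputable def jointAMarkov (PS1 : Fin (ms + 1) → ℝ) (PX1 : Fin (mx + 1) → ℝ)
    (Qm : Fin (mx + 1) → Fin (mx + 1) → ℝ) (q : PolicyA mx my ms) (T : ℕ)
    (ω : Traj mx my ms T) : ℝ :=
  PS1 ω.1 * markovWt PX1 Qm ω.2.1 *
    ∏ t : Fin T, q (t : ℕ) (prefX ω t) ω.1 (prefY ω t) (ω.2.2 t)

/-- Joint law on trajectories induced by Markov demand and a class-`Q_B` policy. -/
noncomputable def jointBMarkov (PS1 : Fin (ms + 1) → ℝ) (PX1 : Fin (mx + 1) → ℝ)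
    (Qm : Fin (mx + 1) → Fin (mx + 1) → ℝ) (q : PolicyB mx my ms) (T : ℕ)
    (ω : Traj mx my ms T) : ℝ :=
  PS1 ω.1 * markovWt PX1 Qm ω.2.1 *
    ∏ t : Fin T, q (t : ℕ) (ω.2.1 t) (Sat ω (t : ℕ)) (prefY ω t) (ω.2.2 t)

/-- The memoryless time-invariant policy `q_t(y | x, s) = b*(y | s - x)`, as a member of the
class of general causal policies. -/
noncomputable def structuredPolicyA (mx my ms : ℕ) (PX : Fin (mx + 1) → ℝ)
    (θ : Fin (ms + 1) → ℝ) : PolicyA mx my ms :=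
  fun t x s1 y yt => bstar mx my ms PX θ (hstate s1 x y - ((x (Fin.last t) : ℕ) : ℤ)) yt

/-! ### Auxiliary development for the proof of `minimizer_symmetric`. -/

section Aux

open Real

variable {mx ms : ℕ}

/-- The closed-form functional `G(θ) = ∑ f(θ s) - ∑ f(ξ w)` with `f t = t log t` (nats). -/
noncomputable def Gfun (mx ms : ℕ) (PX : Fin (mx+1) → ℝ) (θ : Fin (ms+1) → ℝ) : ℝ :=
  (∑ s, θ s * Real.log (θ s)) - ∑ w ∈ Finset.Icc (-(mx:ℤ)) (ms:ℤ),
    xiOf mx ms PX θ w * Real.log (xiOf mx ms PX θ w)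

lemma pr_eq_if {Ω α : Type*} [Fintype Ω] [DecidableEq α]
    (p : Ω → ℝ) (Z : Ω → α) (z : α) :
    pr p Z z = ∑ ω, if Z ω = z then p ω else 0 := by
  rw [pr, Finset.sum_filter]

lemma xiOf_eq_pr (PX : Fin (mx+1) → ℝ) (θ : Fin (ms+1) → ℝ) (w : ℤ) :
    xiOf mx ms PX θ w
      = pr (fun ω : Fin (mx+1) × Fin (ms+1) => PX ω.1 * θ ω.2)
          (fun ω => ((ω.2 : ℕ) : ℤ) - ((ω.1 : ℕ) : ℤ)) w := by
  rw [pr_eq_if, Fintype.sum_prod_type, xiOf]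

lemma closed_form (PX : Fin (mx+1) → ℝ) (hPX : IsPMF PX) (hpos : ∀ x, 0 < PX x)
    (θ : Fin (ms+1) → ℝ) (hθ : IsPMF θ) :
    iidMI mx ms PX θ = Gfun mx ms PX θ / Real.log 2 := by
  classical
  set p : Fin (mx+1) × Fin (ms+1) → ℝ := fun ω => PX ω.1 * θ ω.2 with hp
  set A : Fin (mx+1) × Fin (ms+1) → ℤ := fun ω => ((ω.2 : ℕ) : ℤ) - ((ω.1 : ℕ) : ℤ) with hA
  set B : Fin (mx+1) × Fin (ms+1) → Fin (mx+1) := fun ω => ω.1 with hB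
  have hprB : ∀ x, pr p B x = PX x := by
    intro x
    rw [pr_eq_if, Fintype.sum_prod_type]
    have : ∀ a : Fin (mx+1), (∑ b : Fin (ms+1), if B (a, b) = x then p (a, b) else 0)
        = if a = x then PX a else 0 := by
      intro a
      by_cases h : a = x
      · subst h; simp [hB, hp, ← Finset.mul_sum, hθ.2]
      · simp [hB, hp, h]
    rw [Finset.sum_congr rfl (fun a _ => this a), Finset.sum_ite_eq' Finset.univ x PX]
    simp
  have himB : Finset.univ.image B = Finset.univ := by
    apply Finset.eq_univ_of_forall
    intro x
    exact Finset.mem_image.mpr ⟨(x, 0), Finset.mem_univ _, rfl⟩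
  have hentB : ent p B = -∑ x, PX x * Real.logb 2 (PX x) := by
    rw [ent, himB]
    congr 1
    exact Finset.sum_congr rfl (fun x _ => by rw [hprB])
  -- entropy of A
  have hsubA : Finset.univ.image A ⊆ Finset.Icc (-(mx:ℤ)) (ms:ℤ) := by
    intro w hw
    rcases Finset.mem_image.mp hw with ⟨ω, -, rfl⟩
    have h1 := ω.1.isLt
    have h2 := ω.2.isLt
    simp only [Finset.mem_Icc, hA]
    omega
  have hentA : ent p A = -((∑ w ∈ Finset.Icc (-(mx:ℤ)) (ms:ℤ),
      xiOf mx ms PX θ w * Real.log (xiOf mx ms PX θ w)) / Real.log 2) := by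
    rw [ent]
    rw [Finset.sum_subset hsubA]
    · rw [neg_inj, Finset.sum_div]
      refine Finset.sum_congr rfl (fun w _ => ?_)
      rw [← xiOf_eq_pr, Real.logb, mul_div_assoc]
    · intro w _ hw
      have : pr p A w = 0 := by
        rw [pr]
        apply Finset.sum_eq_zero
        intro ω hω
        exfalso
        apply hw
        rw [Finset.mem_filter] at hω
        exact Finset.mem_image.mpr ⟨ω, Finset.mem_univ _, hω.2⟩
      rw [this, zero_mul]
  -- entropy of the pair
  set Z : Fin (mx+1) × Fin (ms+1) → ℤ × Fin (mx+1) := fun ω => (A ω, B ω) with hZ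
  have hinj : ∀ ω ω' : Fin (mx+1) × Fin (ms+1), Z ω = Z ω' → ω = ω' := by
    intro ω ω' h
    simp only [hZ, hA, hB, Prod.mk.injEq] at h
    obtain ⟨h1, h2⟩ := h
    have : ((ω.2 : ℕ) : ℤ) = ((ω'.2 : ℕ) : ℤ) := by rw [h2] at h1; omega
    have h3 : ω.2 = ω'.2 := by
      apply Fin.ext; exact_mod_cast this
    exact Prod.ext h2 h3
  have hprZ : ∀ ω0, pr p Z (Z ω0) = p ω0 := by
    intro ω0
    rw [pr]
    have : Finset.univ.filter (fun ω => Z ω = Z ω0) = {ω0} := by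
      ext ω
      simp only [Finset.mem_filter, Finset.mem_univ, true_and, Finset.mem_singleton]
      constructor
      · exact hinj ω ω0
      · rintro rfl; rfl
    rw [this, Finset.sum_singleton]
  have hentZ : ent p Z = -∑ ω : Fin (mx+1) × Fin (ms+1), p ω * Real.logb 2 (p ω) := by
    rw [ent, neg_inj]
    rw [Finset.sum_image (fun x _ y _ h => hinj x y h)]
    exact Finset.sum_congr rfl (fun ω _ => by rw [hprZ])
  have hsplit : ∑ ω : Fin (mx+1) × Fin (ms+1), p ω * Real.logb 2 (p ω)
      = (∑ x, PX x * Real.logb 2 (PX x)) + ∑ s, θ s * Real.logb 2 (θ s) := by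
    rw [Fintype.sum_prod_type]
    have : ∀ x s, p (x, s) * Real.logb 2 (p (x, s))
        = θ s * (PX x * Real.logb 2 (PX x)) + PX x * (θ s * Real.logb 2 (θ s)) := by
      intro x s
      by_cases h : θ s = 0
      · simp [hp, h]
      · simp only [hp]
        rw [Real.logb_mul (ne_of_gt (hpos x)) h]
        ring
    calc ∑ x, ∑ s, p (x, s) * Real.logb 2 (p (x, s))
        = ∑ x, ∑ s, (θ s * (PX x * Real.logb 2 (PX x)) + PX x * (θ s * Real.logb 2 (θ s))) :=
          Finset.sum_congr rfl (fun x _ => Finset.sum_congr rfl (fun s _ => this x s))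
      _ = (∑ x, PX x * Real.logb 2 (PX x)) + ∑ s, θ s * Real.logb 2 (θ s) := by
          have h1 : ∀ x : Fin (mx+1),
              (∑ s : Fin (ms+1), (θ s * (PX x * Real.logb 2 (PX x))
                + PX x * (θ s * Real.logb 2 (θ s))))
              = PX x * Real.logb 2 (PX x) + PX x * ∑ s, θ s * Real.logb 2 (θ s) := by
            intro x
            rw [Finset.sum_add_distrib, ← Finset.sum_mul, ← Finset.mul_sum, hθ.2, one_mul]
          rw [Finset.sum_congr rfl (fun x _ => h1 x), Finset.sum_add_distrib,
            ← Finset.sum_mul, hPX.2, one_mul]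
  have hsum1 : ∑ s, θ s * Real.logb 2 (θ s) = (∑ s, θ s * Real.log (θ s)) / Real.log 2 := by
    rw [Finset.sum_div]
    exact Finset.sum_congr rfl (fun s _ => by rw [Real.logb, mul_div_assoc])
  have : iidMI mx ms PX θ = ent p A + ent p B - ent p Z := rfl
  rw [this, hentA, hentB, hentZ, hsplit, hsum1, Gfun, sub_div]
  ring

lemma xiOf_nonneg (PX : Fin (mx+1) → ℝ) (hpx : ∀ x, 0 ≤ PX x)
    (θ : Fin (ms+1) → ℝ) (hθ : ∀ t, 0 ≤ θ t) (w : ℤ) : 0 ≤ xiOf mx ms PX θ w := by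
  apply Finset.sum_nonneg; intro x _; apply Finset.sum_nonneg; intro t _
  split
  · exact mul_nonneg (hpx x) (hθ t)
  · exact le_refl _

lemma single_le_xiOf (PX : Fin (mx+1) → ℝ) (hpx : ∀ x, 0 ≤ PX x)
    (θ : Fin (ms+1) → ℝ) (hθ : ∀ t, 0 ≤ θ t) (x : Fin (mx+1)) (s : Fin (ms+1)) :
    PX x * θ s ≤ xiOf mx ms PX θ (((s:ℕ):ℤ) - ((x:ℕ):ℤ)) := by
  rw [xiOf]
  have h1 : ∀ x' : Fin (mx+1), 0 ≤ ∑ t : Fin (ms+1),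
      if ((t:ℕ):ℤ) - ((x':ℕ):ℤ) = ((s:ℕ):ℤ) - ((x:ℕ):ℤ) then PX x' * θ t else 0 := by
    intro x'; apply Finset.sum_nonneg; intro t _
    split
    · exact mul_nonneg (hpx x') (hθ t)
    · exact le_refl _
  refine le_trans ?_ (Finset.single_le_sum (fun x' _ => h1 x') (Finset.mem_univ x))
  have h2 : ∀ t : Fin (ms+1), 0 ≤
      if ((t:ℕ):ℤ) - ((x:ℕ):ℤ) = ((s:ℕ):ℤ) - ((x:ℕ):ℤ) then PX x * θ t else 0 := by
    intro t; split
    · exact mul_nonneg (hpx x) (hθ t)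
    · exact le_refl _
  refine le_trans ?_ (Finset.single_le_sum (fun t _ => h2 t) (Finset.mem_univ s))
  simp

lemma xiOf_pos (PX : Fin (mx+1) → ℝ) (hpos : ∀ x, 0 < PX x)
    (θ : Fin (ms+1) → ℝ) (hθ : ∀ t, 0 ≤ θ t) (x : Fin (mx+1)) (s : Fin (ms+1))
    (hs : 0 < θ s) : 0 < xiOf mx ms PX θ (((s:ℕ):ℤ) - ((x:ℕ):ℤ)) :=
  lt_of_lt_of_le (mul_pos (hpos x) hs) (single_le_xiOf PX (fun x => le_of_lt (hpos x)) θ hθ x s)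

lemma xiOf_linear (PX : Fin (mx+1) → ℝ) (θ0 θ1 : Fin (ms+1) → ℝ) (a b : ℝ) (w : ℤ) :
    xiOf mx ms PX (fun t => a * θ0 t + b * θ1 t) w
      = a * xiOf mx ms PX θ0 w + b * xiOf mx ms PX θ1 w := by
  simp only [xiOf, Finset.mul_sum, ← Finset.sum_add_distrib]
  refine Finset.sum_congr rfl (fun x _ => Finset.sum_congr rfl (fun t _ => ?_))
  split
  · ring
  · ring

lemma sum_xiOf (PX : Fin (mx+1) → ℝ) (θ : Fin (ms+1) → ℝ) :
    ∑ w ∈ Finset.Icc (-(mx:ℤ)) (ms:ℤ), xiOf mx ms PX θ w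
      = (∑ x, PX x) * (∑ s, θ s) := by
  have key : ∀ x : Fin (mx+1), ∀ t : Fin (ms+1),
      (∑ w ∈ Finset.Icc (-(mx:ℤ)) (ms:ℤ),
        if ((t:ℕ):ℤ) - ((x:ℕ):ℤ) = w then PX x * θ t else 0)
        = PX x * θ t := by
    intro x t
    rw [Finset.sum_ite_eq]
    have h1 := x.isLt; have h2 := t.isLt
    rw [if_pos (Finset.mem_Icc.mpr (by omega))]
  simp only [xiOf]
  rw [Finset.sum_comm]
  have step : ∀ x : Fin (mx+1),
      (∑ w ∈ Finset.Icc (-(mx:ℤ)) (ms:ℤ), ∑ t : Fin (ms+1),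
        if ((t:ℕ):ℤ) - ((x:ℕ):ℤ) = w then PX x * θ t else 0)
      = ∑ t, PX x * θ t := by
    intro x
    rw [Finset.sum_comm]
    exact Finset.sum_congr rfl (fun t _ => key x t)
  rw [Finset.sum_congr rfl (fun x _ => step x), Finset.sum_mul_sum]


lemma val_rev_int {n : ℕ} (s : Fin (n+1)) : ((s.rev : ℕ) : ℤ) = (n : ℤ) - ((s:ℕ):ℤ) := by
  have h := s.isLt
  rw [Fin.val_rev]
  omega

lemma isPMF_rev (θ : Fin (ms+1) → ℝ) (h : IsPMF θ) : IsPMF (fun s : Fin (ms+1) => θ s.rev) := by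
  refine ⟨fun s => h.1 _, ?_⟩
  rw [Fintype.sum_equiv (Fin.revPerm) (fun s : Fin (ms+1) => θ s.rev) θ (fun s => rfl), h.2]

lemma xiOf_rev (PX : Fin (mx+1) → ℝ) (hsym : ∀ x : Fin (mx+1), PX x = PX x.rev)
    (θ : Fin (ms+1) → ℝ) (w : ℤ) :
    xiOf mx ms PX (fun s => θ s.rev) w = xiOf mx ms PX θ ((ms:ℤ) - (mx:ℤ) - w) := by
  simp only [xiOf]
  refine Fintype.sum_equiv (Fin.revPerm) _ _ (fun x => ?_)
  refine Fintype.sum_equiv (Fin.revPerm) _ _ (fun t => ?_)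
  simp only [Fin.revPerm_apply]
  have hx := x.isLt; have ht := t.isLt
  have hc : (((t.rev:ℕ):ℤ) - ((x.rev:ℕ):ℤ) = (ms:ℤ) - (mx:ℤ) - w)
      ↔ (((t:ℕ):ℤ) - ((x:ℕ):ℤ) = w) := by
    rw [val_rev_int, val_rev_int]
    omega
  by_cases h : ((t:ℕ):ℤ) - ((x:ℕ):ℤ) = w
  · rw [if_pos h, if_pos (hc.mpr h), ← hsym x]
  · rw [if_neg h, if_neg (fun hh => h (hc.mp hh))]

lemma Gfun_rev (PX : Fin (mx+1) → ℝ) (hsym : ∀ x : Fin (mx+1), PX x = PX x.rev)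
    (θ : Fin (ms+1) → ℝ) :
    Gfun mx ms PX (fun s => θ s.rev) = Gfun mx ms PX θ := by
  rw [Gfun, Gfun]
  congr 1
  · exact Fintype.sum_equiv (Fin.revPerm) _ _ (fun s => rfl)
  · rw [Finset.sum_congr rfl (fun w _ => by rw [xiOf_rev PX hsym θ w])]
    refine Finset.sum_nbij' (i := fun w => (ms:ℤ) - (mx:ℤ) - w)
      (j := fun w => (ms:ℤ) - (mx:ℤ) - w) ?_ ?_ ?_ ?_ ?_
    · intro a ha; simp only [Finset.mem_Icc] at *; omega
    · intro a ha; simp only [Finset.mem_Icc] at *; omega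
    · intro a ha; omega
    · intro a ha; omega
    · intro a ha; simp


lemma logsum_lt (a0 a1 b0 b1 : ℝ) (ha0 : 0 < a0) (ha1 : 0 < a1) (hb0 : 0 < b0)
    (hb1 : 0 < b1) (hne : a0 * b1 ≠ a1 * b0) :
    (a0+a1) * Real.log ((a0+a1)/(b0+b1)) < a0 * Real.log (a0/b0) + a1 * Real.log (a1/b1) := by
  have hb : 0 < b0 + b1 := by linarith
  have hxy : a0/b0 ≠ a1/b1 := by
    intro h
    rw [div_eq_div_iff (ne_of_gt hb0) (ne_of_gt hb1)] at h
    exact hne h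
  have key := Real.strictConvexOn_mul_log.2 (Set.mem_Ici.mpr (le_of_lt (div_pos ha0 hb0)))
      (Set.mem_Ici.mpr (le_of_lt (div_pos ha1 hb1))) hxy
      (div_pos hb0 hb) (div_pos hb1 hb) (by field_simp)
  rw [smul_eq_mul, smul_eq_mul, smul_eq_mul, smul_eq_mul] at key
  have e1 : b0/(b0+b1) * (a0/b0) + b1/(b0+b1) * (a1/b1) = (a0+a1)/(b0+b1) := by
    field_simp
  rw [e1] at key
  have h2 := mul_lt_mul_of_pos_left key hb
  have lhs_eq : (b0+b1) * ((a0+a1)/(b0+b1) * Real.log ((a0+a1)/(b0+b1)))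
      = (a0+a1) * Real.log ((a0+a1)/(b0+b1)) := by
    field_simp
  have rhs_eq : (b0+b1) * (b0/(b0+b1) * (a0/b0 * Real.log (a0/b0))
        + b1/(b0+b1) * (a1/b1 * Real.log (a1/b1)))
      = a0 * Real.log (a0/b0) + a1 * Real.log (a1/b1) := by
    field_simp
  rw [lhs_eq, rhs_eq] at h2
  exact h2

lemma logsum_le (a0 a1 b0 b1 : ℝ) (ha0 : 0 < a0) (ha1 : 0 < a1) (hb0 : 0 < b0)
    (hb1 : 0 < b1) :
    (a0+a1) * Real.log ((a0+a1)/(b0+b1)) ≤ a0 * Real.log (a0/b0) + a1 * Real.log (a1/b1) := by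
  by_cases hne : a0 * b1 = a1 * b0
  · have h1 : a0/b0 = a1/b1 := by rw [div_eq_div_iff (ne_of_gt hb0) (ne_of_gt hb1)]; exact hne
    have h2 : (a0+a1)/(b0+b1) = a0/b0 := by
      rw [div_eq_div_iff (by positivity) (ne_of_gt hb0)]
      nlinarith [hne]
    rw [h2, ← h1]
    exact le_of_eq (by ring)
  · exact le_of_lt (logsum_lt a0 a1 b0 b1 ha0 ha1 hb0 hb1 hne)

lemma logsum_eq_imp (a0 a1 b0 b1 : ℝ) (ha0 : 0 < a0) (ha1 : 0 < a1) (hb0 : 0 < b0)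
    (hb1 : 0 < b1)
    (heq : (a0+a1) * Real.log ((a0+a1)/(b0+b1)) = a0 * Real.log (a0/b0) + a1 * Real.log (a1/b1)) :
    a0 * b1 = a1 * b0 := by
  by_contra hne
  exact absurd heq (ne_of_lt (logsum_lt a0 a1 b0 b1 ha0 ha1 hb0 hb1 hne))

/-- KL-type representation of `Gfun`. -/
lemma Gfun_KL (PX : Fin (mx+1) → ℝ) (hPX : IsPMF PX)
    (θ : Fin (ms+1) → ℝ) :
    Gfun mx ms PX θ = ∑ x : Fin (mx+1), ∑ s : Fin (ms+1),
      (PX x * (θ s * Real.log (θ s))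
      - PX x * (θ s * Real.log (xiOf mx ms PX θ (((s:ℕ):ℤ) - ((x:ℕ):ℤ))))) := by
  have split : ∀ x : Fin (mx+1), (∑ s : Fin (ms+1), (PX x * (θ s * Real.log (θ s))
      - PX x * (θ s * Real.log (xiOf mx ms PX θ (((s:ℕ):ℤ) - ((x:ℕ):ℤ))))))
      = (∑ s, PX x * (θ s * Real.log (θ s)))
        - ∑ s, PX x * (θ s * Real.log (xiOf mx ms PX θ (((s:ℕ):ℤ) - ((x:ℕ):ℤ)))) :=
    fun x => Finset.sum_sub_distrib _ _
  rw [Finset.sum_congr rfl (fun x _ => split x), Finset.sum_sub_distrib, Gfun]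
  congr 1
  · have e : ∀ x : Fin (mx+1), (∑ s, PX x * (θ s * Real.log (θ s)))
        = PX x * ∑ s, θ s * Real.log (θ s) := fun x => (Finset.mul_sum _ _ _).symm
    rw [Finset.sum_congr rfl (fun x _ => e x), ← Finset.sum_mul, hPX.2, one_mul]
  · have expand : ∀ (x : Fin (mx+1)) (s : Fin (ms+1)),
        PX x * (θ s * Real.log (xiOf mx ms PX θ (((s:ℕ):ℤ) - ((x:ℕ):ℤ))))
        = ∑ w ∈ Finset.Icc (-(mx:ℤ)) (ms:ℤ),
            (if ((s:ℕ):ℤ) - ((x:ℕ):ℤ) = w then PX x * θ s else 0)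
              * Real.log (xiOf mx ms PX θ w) := by
      intro x s
      have h3 : ∀ w ∈ Finset.Icc (-(mx:ℤ)) (ms:ℤ),
          (if ((s:ℕ):ℤ) - ((x:ℕ):ℤ) = w then PX x * θ s else 0)
            * Real.log (xiOf mx ms PX θ w)
          = (if ((s:ℕ):ℤ) - ((x:ℕ):ℤ) = w
              then PX x * θ s * Real.log (xiOf mx ms PX θ w) else 0) := by
        intro w _
        split
        · rfl
        · exact zero_mul _
      rw [Finset.sum_congr rfl h3, Finset.sum_ite_eq]
      have h1 := x.isLt; have h2 := s.isLt
      rw [if_pos (Finset.mem_Icc.mpr (by omega))]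
      ring
    rw [Finset.sum_congr rfl (fun x _ => Finset.sum_congr rfl (fun s _ => expand x s))]
    have sw1 : ∀ x : Fin (mx+1), (∑ s : Fin (ms+1), ∑ w ∈ Finset.Icc (-(mx:ℤ)) (ms:ℤ),
        (if ((s:ℕ):ℤ) - ((x:ℕ):ℤ) = w then PX x * θ s else 0)
          * Real.log (xiOf mx ms PX θ w))
        = ∑ w ∈ Finset.Icc (-(mx:ℤ)) (ms:ℤ), ∑ s : Fin (ms+1),
        (if ((s:ℕ):ℤ) - ((x:ℕ):ℤ) = w then PX x * θ s else 0)
          * Real.log (xiOf mx ms PX θ w) := fun x => Finset.sum_comm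
    rw [Finset.sum_congr rfl (fun x _ => sw1 x), Finset.sum_comm]
    refine Finset.sum_congr rfl (fun w _ => ?_)
    rw [xiOf, Finset.sum_mul]
    refine Finset.sum_congr rfl (fun x _ => ?_)
    rw [Finset.sum_mul]


lemma gb_core (c a0 a1 b0 b1 : ℝ) (hc : 0 < c) (ha0 : 0 < a0) (ha1 : 0 < a1)
    (hb0 : 0 < b0) (hb1 : 0 < b1) :
    (c * ((1/2*a0 + 1/2*a1) * Real.log (1/2*a0 + 1/2*a1))
      - c * ((1/2*a0 + 1/2*a1) * Real.log (1/2*b0 + 1/2*b1))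
      = c/2 * ((a0+a1) * Real.log ((a0+a1)/(b0+b1))))
    ∧ (((c * (a0 * Real.log a0) - c * (a0 * Real.log b0))
        + (c * (a1 * Real.log a1) - c * (a1 * Real.log b1)))/2
      = c/2 * (a0 * Real.log (a0/b0) + a1 * Real.log (a1/b1))) := by
  have hM : (1/2*a0 + 1/2*a1 : ℝ) = (a0+a1)/2 := by ring
  have hN : (1/2*b0 + 1/2*b1 : ℝ) = (b0+b1)/2 := by ring
  have L1 : Real.log ((a0+a1)/2) - Real.log ((b0+b1)/2) = Real.log ((a0+a1)/(b0+b1)) := by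
    rw [← Real.log_div (by positivity) (by positivity)]
    congr 1
    field_simp
  have L2 : Real.log (a0/b0) = Real.log a0 - Real.log b0 :=
    Real.log_div (ne_of_gt ha0) (ne_of_gt hb0)
  have L3 : Real.log (a1/b1) = Real.log a1 - Real.log b1 :=
    Real.log_div (ne_of_gt ha1) (ne_of_gt hb1)
  constructor
  · rw [hM, hN, ← L1]
    ring
  · rw [L2, L3]
    ring

lemma gbound (c a0 a1 b0 b1 : ℝ) (hc : 0 < c) (ha0 : 0 < a0) (ha1 : 0 < a1)
    (hb0 : 0 < b0) (hb1 : 0 < b1) :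
    c * ((1/2*a0 + 1/2*a1) * Real.log (1/2*a0 + 1/2*a1))
      - c * ((1/2*a0 + 1/2*a1) * Real.log (1/2*b0 + 1/2*b1))
    ≤ ((c * (a0 * Real.log a0) - c * (a0 * Real.log b0))
        + (c * (a1 * Real.log a1) - c * (a1 * Real.log b1)))/2 := by
  obtain ⟨e1, e2⟩ := gb_core c a0 a1 b0 b1 hc ha0 ha1 hb0 hb1
  rw [e1, e2]
  exact mul_le_mul_of_nonneg_left (logsum_le a0 a1 b0 b1 ha0 ha1 hb0 hb1)
    (by positivity)

lemma gbound_eq (c a0 a1 b0 b1 : ℝ) (hc : 0 < c) (ha0 : 0 < a0) (ha1 : 0 < a1)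
    (hb0 : 0 < b0) (hb1 : 0 < b1)
    (heq : c * ((1/2*a0 + 1/2*a1) * Real.log (1/2*a0 + 1/2*a1))
      - c * ((1/2*a0 + 1/2*a1) * Real.log (1/2*b0 + 1/2*b1))
    = ((c * (a0 * Real.log a0) - c * (a0 * Real.log b0))
        + (c * (a1 * Real.log a1) - c * (a1 * Real.log b1)))/2) :
    a0 * b1 = a1 * b0 := by
  obtain ⟨e1, e2⟩ := gb_core c a0 a1 b0 b1 hc ha0 ha1 hb0 hb1
  rw [e1, e2] at heq
  have hc2 : (c/2 : ℝ) ≠ 0 := by positivity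
  exact logsum_eq_imp a0 a1 b0 b1 ha0 ha1 hb0 hb1 (mul_left_cancel₀ hc2 heq)


/-- If two fully supported pmfs both minimize `Gfun`, the per-term log-sum equalities force
the cross-product relations between them. -/
lemma cross_eq (PX : Fin (mx+1) → ℝ) (hPX : IsPMF PX) (hpos : ∀ x, 0 < PX x)
    (θ0 θ1 : Fin (ms+1) → ℝ) (hθ0 : IsPMF θ0) (hθ1 : IsPMF θ1)
    (hfs0 : ∀ t, 0 < θ0 t) (hfs1 : ∀ t, 0 < θ1 t)
    (hG : Gfun mx ms PX θ1 = Gfun mx ms PX θ0)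
    (hmin : ∀ θ : Fin (ms+1) → ℝ, IsPMF θ → Gfun mx ms PX θ0 ≤ Gfun mx ms PX θ) :
    ∀ (x : Fin (mx+1)) (s : Fin (ms+1)),
      θ0 s * xiOf mx ms PX θ1 (((s:ℕ):ℤ) - ((x:ℕ):ℤ))
        = θ1 s * xiOf mx ms PX θ0 (((s:ℕ):ℤ) - ((x:ℕ):ℤ)) := by
  classical
  set m : Fin (ms+1) → ℝ := fun t => 1/2 * θ0 t + 1/2 * θ1 t with hm_def
  have hm : IsPMF m := by
    constructor
    · intro t
      have h0 := hθ0.1 t; have h1 := hθ1.1 t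
      simp only [hm_def]
      linarith
    · simp only [hm_def]
      rw [Finset.sum_add_distrib, ← Finset.mul_sum, ← Finset.mul_sum, hθ0.2, hθ1.2]
      norm_num
  set ξ0 : ℤ → ℝ := xiOf mx ms PX θ0 with hks0
  set ξ1 : ℤ → ℝ := xiOf mx ms PX θ1 with hks1
  have hxm : ∀ w, xiOf mx ms PX (fun t => 1/2 * θ0 t + 1/2 * θ1 t) w
      = 1/2 * ξ0 w + 1/2 * ξ1 w := fun w => xiOf_linear PX θ0 θ1 (1/2) (1/2) w
  set T0 : Fin (mx+1) → Fin (ms+1) → ℝ := fun x s =>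
    PX x * (θ0 s * Real.log (θ0 s))
      - PX x * (θ0 s * Real.log (ξ0 (((s:ℕ):ℤ) - ((x:ℕ):ℤ)))) with hT0def
  set T1 : Fin (mx+1) → Fin (ms+1) → ℝ := fun x s =>
    PX x * (θ1 s * Real.log (θ1 s))
      - PX x * (θ1 s * Real.log (ξ1 (((s:ℕ):ℤ) - ((x:ℕ):ℤ)))) with hT1def
  set Tm : Fin (mx+1) → Fin (ms+1) → ℝ := fun x s =>
    PX x * ((1/2 * θ0 s + 1/2 * θ1 s) * Real.log (1/2 * θ0 s + 1/2 * θ1 s))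
      - PX x * ((1/2 * θ0 s + 1/2 * θ1 s)
          * Real.log (1/2 * ξ0 (((s:ℕ):ℤ) - ((x:ℕ):ℤ))
              + 1/2 * ξ1 (((s:ℕ):ℤ) - ((x:ℕ):ℤ)))) with hTmdef
  have hK0 : Gfun mx ms PX θ0 = ∑ x, ∑ s, T0 x s := Gfun_KL PX hPX θ0
  have hK1 : Gfun mx ms PX θ1 = ∑ x, ∑ s, T1 x s := Gfun_KL PX hPX θ1
  have hKm : Gfun mx ms PX m = ∑ x, ∑ s, Tm x s := by
    rw [Gfun_KL PX hPX m]
    refine Finset.sum_congr rfl fun x _ => Finset.sum_congr rfl fun s _ => ?_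
    simp only [hm_def, hTmdef, hxm]
  have hb0 : ∀ (x : Fin (mx+1)) (s : Fin (ms+1)),
      0 < ξ0 (((s:ℕ):ℤ) - ((x:ℕ):ℤ)) := fun x s => xiOf_pos PX hpos θ0 hθ0.1 x s (hfs0 s)
  have hb1 : ∀ (x : Fin (mx+1)) (s : Fin (ms+1)),
      0 < ξ1 (((s:ℕ):ℤ) - ((x:ℕ):ℤ)) := fun x s => xiOf_pos PX hpos θ1 hθ1.1 x s (hfs1 s)
  have hb : ∀ (x : Fin (mx+1)) (s : Fin (ms+1)), Tm x s ≤ (T0 x s + T1 x s)/2 := by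
    intro x s
    simp only [hT0def, hT1def, hTmdef]
    exact gbound (PX x) (θ0 s) (θ1 s) _ _ (hpos x) (hfs0 s) (hfs1 s) (hb0 x s) (hb1 x s)
  have h2 : (∑ x, ∑ s, (T0 x s + T1 x s)/2)
      = (Gfun mx ms PX θ0 + Gfun mx ms PX θ1)/2 := by
    have e_in : ∀ x : Fin (mx+1), (∑ s, (T0 x s + T1 x s)/2)
        = ((∑ s, T0 x s) + (∑ s, T1 x s))/2 := by
      intro x
      rw [← Finset.sum_div, Finset.sum_add_distrib]
    rw [Finset.sum_congr rfl (fun x _ => e_in x), ← Finset.sum_div, Finset.sum_add_distrib,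
      hK0, hK1]
  have h1 : Gfun mx ms PX m ≤ (Gfun mx ms PX θ0 + Gfun mx ms PX θ1)/2 := by
    rw [hKm, ← h2]
    exact Finset.sum_le_sum (fun x _ => Finset.sum_le_sum (fun s _ => hb x s))
  have hGm_eq : Gfun mx ms PX m = Gfun mx ms PX θ0 := by
    have hlo := hmin m hm
    rw [hG] at h1
    have : (Gfun mx ms PX θ0 + Gfun mx ms PX θ0)/2 = Gfun mx ms PX θ0 := by ring
    rw [this] at h1
    linarith
  have hzero : ∑ x, ∑ s, ((T0 x s + T1 x s)/2 - Tm x s) = 0 := by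
    have e_in : ∀ x : Fin (mx+1), (∑ s, ((T0 x s + T1 x s)/2 - Tm x s))
        = (∑ s, (T0 x s + T1 x s)/2) - ∑ s, Tm x s := fun x => Finset.sum_sub_distrib _ _
    rw [Finset.sum_congr rfl (fun x _ => e_in x), Finset.sum_sub_distrib, h2, ← hKm,
      hGm_eq, hG]
    ring
  have hslack : ∀ (x : Fin (mx+1)) (s : Fin (ms+1)), (T0 x s + T1 x s)/2 - Tm x s = 0 := by
    have houter := (Finset.sum_eq_zero_iff_of_nonneg
      (fun x _ => Finset.sum_nonneg (fun s _ => by linarith [hb x s]))).mp hzero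
    intro x s
    have hinner := (Finset.sum_eq_zero_iff_of_nonneg
      (fun s _ => by linarith [hb x s])).mp (houter x (Finset.mem_univ x))
    exact hinner s (Finset.mem_univ s)
  intro x s
  have heq : Tm x s = (T0 x s + T1 x s)/2 := by linarith [hslack x s]
  simp only [hT0def, hT1def, hTmdef] at heq
  exact gbound_eq (PX x) (θ0 s) (θ1 s) _ _ (hpos x) (hfs0 s) (hfs1 s) (hb0 x s) (hb1 x s) heq


open Filter in
/-- If `F ε - F 0 = c·ε log ε + (R ε - R 0)` with `c > 0` and `R` differentiable at `0`,
then `F` takes values below `F 0` arbitrarily close to `0⁺`. -/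
lemma exists_small_neg (c d : ℝ) (hc : 0 < c) (R : ℝ → ℝ) (hR : HasDerivAt R d 0)
    (F : ℝ → ℝ)
    (hF : ∀ ε : ℝ, 0 < ε → ε < 1 → F ε - F 0 = c * (ε * Real.log ε) + (R ε - R 0)) :
    ∃ ε : ℝ, 0 < ε ∧ ε < 1 ∧ F ε < F 0 := by
  have h1 := hasDerivAt_iff_tendsto_slope.mp hR
  have h2 : Tendsto (slope R 0) (nhdsWithin 0 (Set.Ioi 0)) (nhds d) :=
    h1.mono_left (nhdsWithin_mono _ (fun x hx => ne_of_gt hx))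
  have hslope : Tendsto (fun ε : ℝ => (R ε - R 0)/ε) (nhdsWithin 0 (Set.Ioi 0)) (nhds d) := by
    refine Tendsto.congr (fun ε => ?_) h2
    rw [slope_def_field, sub_zero]
  have hlog : Tendsto (fun ε : ℝ => c * Real.log ε) (nhdsWithin 0 (Set.Ioi 0)) atBot :=
    Real.tendsto_log_nhdsGT_zero.const_mul_atBot hc
  have hbd : ∀ᶠ ε in nhdsWithin (0:ℝ) (Set.Ioi 0), (R ε - R 0)/ε ≤ d + 1 :=
    hslope.eventually (eventually_le_nhds (lt_add_one d))
  have hsum : Tendsto (fun ε : ℝ => c * Real.log ε + (R ε - R 0)/ε)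
      (nhdsWithin 0 (Set.Ioi 0)) atBot :=
    tendsto_atBot_add_right_of_ge' _ (d+1) hlog hbd
  have hev : ∀ᶠ ε in nhdsWithin (0:ℝ) (Set.Ioi 0),
      c * Real.log ε + (R ε - R 0)/ε < 0 := hsum.eventually_lt_atBot 0
  have hev2 : ∀ᶠ ε in nhdsWithin (0:ℝ) (Set.Ioi 0), ε < 1 := by
    filter_upwards [Ioo_mem_nhdsGT_of_mem (Set.mem_Ico.mpr ⟨le_refl (0:ℝ), zero_lt_one⟩)]
      with ε hε
    exact hε.2
  have hev3 : ∀ᶠ ε in nhdsWithin (0:ℝ) (Set.Ioi 0), (0:ℝ) < ε := by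
    filter_upwards [self_mem_nhdsWithin] with ε hε
    exact hε
  obtain ⟨ε, h5, h6, h7⟩ := (hev.and (hev2.and hev3)).exists
  refine ⟨ε, h7, h6, ?_⟩
  have hne : ε ≠ 0 := ne_of_gt h7
  have key : F ε - F 0 = ε * (c * Real.log ε + (R ε - R 0)/ε) := by
    rw [hF ε h7 h6]
    field_simp
  have : F ε - F 0 < 0 := by
    rw [key]
    exact mul_neg_of_pos_of_neg h7 h5
  linarith

/-- A pmf with a zero at `s`, while `ξ` is positive somewhere in the window of `s`,
cannot minimize `Gfun`. -/
lemma not_min_of_zero (PX : Fin (mx+1) → ℝ) (hPX : IsPMF PX) (hpos : ∀ x, 0 < PX x)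
    (θ : Fin (ms+1) → ℝ) (hθ : IsPMF θ) (s : Fin (ms+1)) (hzs : θ s = 0)
    (w0 : ℤ) (hw1 : ((s:ℕ):ℤ) - (mx:ℤ) ≤ w0) (hw2 : w0 ≤ ((s:ℕ):ℤ))
    (hξw0 : 0 < xiOf mx ms PX θ w0) :
    ¬ (∀ θ' : Fin (ms+1) → ℝ, IsPMF θ' → Gfun mx ms PX θ ≤ Gfun mx ms PX θ') := by
  classical
  intro hmin
  set δ : Fin (ms+1) → ℝ := fun t => if t = s then 1 else 0 with hδdef
  have hδnn : ∀ t, 0 ≤ δ t := by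
    intro t; simp only [hδdef]; split <;> norm_num
  have hδsum : ∑ t, δ t = 1 := by
    simp only [hδdef]
    rw [Finset.sum_ite_eq' Finset.univ s (fun _ => (1:ℝ))]
    simp
  have hδpmf : IsPMF δ := ⟨hδnn, hδsum⟩
  set ξ : ℤ → ℝ := xiOf mx ms PX θ with hξdef
  set ψ : ℤ → ℝ := xiOf mx ms PX δ with hψdef
  have hξnn : ∀ w, 0 ≤ ξ w := xiOf_nonneg PX (fun x => le_of_lt (hpos x)) θ hθ.1
  have hψnn : ∀ w, 0 ≤ ψ w := xiOf_nonneg PX (fun x => le_of_lt (hpos x)) δ hδnn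
  have hs := s.isLt
  -- ψ is positive at w0
  have hψw0 : 0 < ψ w0 := by
    have hxval : ((s:ℕ):ℤ) - w0 = (((((s:ℕ):ℤ) - w0).toNat : ℕ) : ℤ) := by omega
    set x0 : Fin (mx+1) := ⟨(((s:ℕ):ℤ) - w0).toNat, by omega⟩ with hx0
    have h1 : PX x0 * δ s ≤ ψ (((s:ℕ):ℤ) - ((x0:ℕ):ℤ)) :=
      single_le_xiOf PX (fun x => le_of_lt (hpos x)) δ hδnn x0 s
    have h2 : ((s:ℕ):ℤ) - ((x0:ℕ):ℤ) = w0 := by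
      simp only [hx0]
      omega
    rw [h2] at h1
    have h3 : δ s = 1 := by simp [hδdef]
    rw [h3, mul_one] at h1
    exact lt_of_lt_of_le (hpos x0) h1
  set W0 : Finset ℤ := (Finset.Icc (-(mx:ℤ)) (ms:ℤ)).filter (fun w => ξ w = 0) with hW0def
  set Wp : Finset ℤ := (Finset.Icc (-(mx:ℤ)) (ms:ℤ)).filter (fun w => ¬ ξ w = 0) with hWpdef
  set c0 : ℝ := ∑ w ∈ W0, ψ w with hc0def
  -- c0 < 1
  have hpsisum : ∑ w ∈ Finset.Icc (-(mx:ℤ)) (ms:ℤ), ψ w = 1 := by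
    rw [hψdef, sum_xiOf PX δ, hPX.2, hδsum, one_mul]
  have hw0mem : w0 ∈ Wp := by
    simp only [hWpdef, Finset.mem_filter, Finset.mem_Icc]
    exact ⟨⟨by omega, by omega⟩, ne_of_gt hξw0⟩
  have hsplitsum : c0 + ∑ w ∈ Wp, ψ w = 1 := by
    rw [hc0def, hW0def, hWpdef, Finset.sum_filter_add_sum_filter_not, hpsisum]
  have hWp_ge : ψ w0 ≤ ∑ w ∈ Wp, ψ w :=
    Finset.single_le_sum (fun w _ => hψnn w) hw0mem
  have hc : 0 < 1 - c0 := by linarith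
  -- ingredients for R
  set SF : ℝ := ∑ t, θ t * Real.log (θ t) with hSFdef
  set SW0 : ℝ := ∑ w ∈ W0, ψ w * Real.log (ψ w) with hSW0def
  set R : ℝ → ℝ := fun ε => (1-ε) * SF + (1-ε) * Real.log (1-ε) - ε * SW0
      - ∑ w ∈ Wp, (((1-ε) * ξ w + ε * ψ w) * Real.log ((1-ε) * ξ w + ε * ψ w)) with hRdef
  set F : ℝ → ℝ := fun ε => Gfun mx ms PX (fun t => (1-ε) * θ t + ε * δ t) with hFdef
  -- F 0 = Gfun θ
  have hθ0 : (fun t => (1-(0:ℝ)) * θ t + 0 * δ t) = θ := funext (fun t => by ring)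
  have hF0 : F 0 = Gfun mx ms PX θ := by rw [hFdef]; simp only [hθ0]
  -- Gfun θ = R 0
  have hGR0 : Gfun mx ms PX θ = R 0 := by
    rw [hRdef, Gfun]
    simp only [sub_zero, one_mul, Real.log_one, zero_mul, mul_zero, add_zero, mul_one]
    rw [← hSFdef, ← hξdef]
    have : ∑ w ∈ Finset.Icc (-(mx:ℤ)) (ms:ℤ), ξ w * Real.log (ξ w)
        = (∑ w ∈ W0, ξ w * Real.log (ξ w)) + ∑ w ∈ Wp, ξ w * Real.log (ξ w) := by
      rw [hW0def, hWpdef, Finset.sum_filter_add_sum_filter_not]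
    rw [this]
    have hz : ∑ w ∈ W0, ξ w * Real.log (ξ w) = 0 := by
      apply Finset.sum_eq_zero
      intro w hw
      have : ξ w = 0 := (Finset.mem_filter.mp hw).2
      rw [this, zero_mul]
    rw [hz, zero_add]
  -- the key identity
  have hFid : ∀ ε : ℝ, 0 < ε → ε < 1 →
      F ε - F 0 = (1 - c0) * (ε * Real.log ε) + (R ε - R 0) := by
    intro ε hε0 hε1
    have h1ε : (0:ℝ) < 1 - ε := by linarith
    have hxil : ∀ w, xiOf mx ms PX (fun t => (1-ε) * θ t + ε * δ t) w
        = (1-ε) * ξ w + ε * ψ w := fun w => xiOf_linear PX θ δ (1-ε) ε w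
    have hpart1 : ∑ t, ((1-ε) * θ t + ε * δ t) * Real.log ((1-ε) * θ t + ε * δ t)
        = ε * Real.log ε + ((1-ε) * SF + (1-ε) * Real.log (1-ε)) := by
      have hterm : ∀ t : Fin (ms+1), ((1-ε) * θ t + ε * δ t) * Real.log ((1-ε) * θ t + ε * δ t)
          = ((1-ε) * (θ t * Real.log (θ t)) + Real.log (1-ε) * ((1-ε) * θ t))
            + (if t = s then ε * Real.log ε else 0) := by
        intro t
        by_cases ht : t = s
        · subst ht
          rw [if_pos rfl, hzs]
          simp [hδdef]
        · rw [if_neg ht]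
          have : δ t = 0 := by simp [hδdef, ht]
          rw [this, mul_zero, add_zero]
          by_cases hθt : θ t = 0
          · rw [hθt]
            simp
          · rw [Real.log_mul (ne_of_gt h1ε) hθt]
            ring
      rw [Finset.sum_congr rfl (fun t _ => hterm t), Finset.sum_add_distrib]
      have e1 : ∑ t : Fin (ms+1), (if t = s then ε * Real.log ε else 0) = ε * Real.log ε := by
        rw [Finset.sum_ite_eq' Finset.univ s (fun _ => ε * Real.log ε)]
        simp
      have e2 : ∑ t : Fin (ms+1), ((1-ε) * (θ t * Real.log (θ t))
          + Real.log (1-ε) * ((1-ε) * θ t))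
          = (1-ε) * SF + Real.log (1-ε) * (1-ε) := by
        rw [Finset.sum_add_distrib, ← Finset.mul_sum, ← hSFdef, ← Finset.mul_sum,
          ← Finset.mul_sum, hθ.2, mul_one]
      rw [e1, e2]
      ring
    have hpart2 : ∑ w ∈ Finset.Icc (-(mx:ℤ)) (ms:ℤ),
        (((1-ε) * ξ w + ε * ψ w) * Real.log ((1-ε) * ξ w + ε * ψ w))
        = (c0 * (ε * Real.log ε) + ε * SW0)
          + ∑ w ∈ Wp, (((1-ε) * ξ w + ε * ψ w) * Real.log ((1-ε) * ξ w + ε * ψ w)) := by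
      have hsp : ∑ w ∈ Finset.Icc (-(mx:ℤ)) (ms:ℤ),
          (((1-ε) * ξ w + ε * ψ w) * Real.log ((1-ε) * ξ w + ε * ψ w))
          = (∑ w ∈ W0, (((1-ε) * ξ w + ε * ψ w) * Real.log ((1-ε) * ξ w + ε * ψ w)))
            + ∑ w ∈ Wp, (((1-ε) * ξ w + ε * ψ w) * Real.log ((1-ε) * ξ w + ε * ψ w)) := by
        rw [hW0def, hWpdef, Finset.sum_filter_add_sum_filter_not]
      rw [hsp]
      congr 1
      have hterm : ∀ w ∈ W0, (((1-ε) * ξ w + ε * ψ w) * Real.log ((1-ε) * ξ w + ε * ψ w))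
          = ψ w * (ε * Real.log ε) + ε * (ψ w * Real.log (ψ w)) := by
        intro w hw
        have hz : ξ w = 0 := (Finset.mem_filter.mp hw).2
        rw [hz, mul_zero, zero_add]
        by_cases hψz : ψ w = 0
        · rw [hψz]
          simp
        · rw [Real.log_mul (ne_of_gt hε0) hψz]
          ring
      rw [Finset.sum_congr rfl hterm, Finset.sum_add_distrib, ← Finset.sum_mul,
        ← Finset.mul_sum, ← hc0def, ← hSW0def]
    -- assemble
    have hFε : F ε = (∑ t, ((1-ε) * θ t + ε * δ t) * Real.log ((1-ε) * θ t + ε * δ t))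
        - ∑ w ∈ Finset.Icc (-(mx:ℤ)) (ms:ℤ),
          (((1-ε) * ξ w + ε * ψ w) * Real.log ((1-ε) * ξ w + ε * ψ w)) := by
      simp only [hFdef, Gfun]
      congr 1
      exact Finset.sum_congr rfl (fun w _ => by rw [hxil w])
    rw [hFε, hpart1, hpart2, hF0, hGR0, hRdef]
    simp only [sub_zero, one_mul, Real.log_one, zero_mul, mul_zero, add_zero, mul_one]
    ring
  -- differentiability of R at 0
  obtain ⟨d, hR⟩ : ∃ d, HasDerivAt R d 0 := by
    have h1 : HasDerivAt (fun ε : ℝ => (1-ε) * SF) (-SF) 0 := by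
      have := ((hasDerivAt_id (0:ℝ)).const_sub 1).mul_const SF
      exact this.congr_deriv (by ring)
    have h2 : HasDerivAt (fun ε : ℝ => (1-ε) * Real.log (1-ε)) (-(Real.log (1-(0:ℝ)) + 1)) 0 := by
      have hu : HasDerivAt (fun ε : ℝ => 1 - ε) (-1) 0 := (hasDerivAt_id (0:ℝ)).const_sub 1
      have hf : HasDerivAt (fun x : ℝ => x * Real.log x) (Real.log (1-(0:ℝ)) + 1) (1-(0:ℝ)) :=
        Real.hasDerivAt_mul_log (by norm_num)
      have := hf.comp 0 hu
      exact this.congr_deriv (by ring)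
    have h3 : HasDerivAt (fun ε : ℝ => ε * SW0) SW0 0 := by
      have := (hasDerivAt_id (0:ℝ)).mul_const SW0
      exact this.congr_deriv (by ring)
    have h4 : HasDerivAt (fun ε : ℝ => ∑ w ∈ Wp,
        (((1-ε) * ξ w + ε * ψ w) * Real.log ((1-ε) * ξ w + ε * ψ w)))
        (∑ w ∈ Wp, (Real.log ((1-(0:ℝ)) * ξ w + 0 * ψ w) + 1) * (ψ w - ξ w)) 0 := by
      apply HasDerivAt.fun_sum
      intro w hw
      have hξw : ξ w ≠ 0 := (Finset.mem_filter.mp hw).2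
      have hu : HasDerivAt (fun ε : ℝ => (1-ε) * ξ w + ε * ψ w) (ψ w - ξ w) 0 := by
        have hu1 : HasDerivAt (fun ε : ℝ => (1-ε) * ξ w) (-ξ w) 0 := by
          have := ((hasDerivAt_id (0:ℝ)).const_sub 1).mul_const (ξ w)
          exact this.congr_deriv (by ring)
        have hu2 : HasDerivAt (fun ε : ℝ => ε * ψ w) (ψ w) 0 := by
          have := (hasDerivAt_id (0:ℝ)).mul_const (ψ w)
          exact this.congr_deriv (by ring)
        have := hu1.add hu2
        exact this.congr_deriv (by ring)
      have hne : (1-(0:ℝ)) * ξ w + 0 * ψ w ≠ 0 := by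
        simpa using hξw
      have hf : HasDerivAt (fun x : ℝ => x * Real.log x)
          (Real.log ((1-(0:ℝ)) * ξ w + 0 * ψ w) + 1) ((1-(0:ℝ)) * ξ w + 0 * ψ w) :=
        Real.hasDerivAt_mul_log hne
      exact hf.comp 0 hu
    exact ⟨_, ((h1.add h2).sub h3).sub h4⟩
  -- conclude
  obtain ⟨ε, hε0, hε1, hlt⟩ := exists_small_neg (1-c0) d hc R hR F hFid
  have hpmf : IsPMF (fun t => (1-ε) * θ t + ε * δ t) := by
    constructor
    · intro t
      exact add_nonneg (mul_nonneg (by linarith) (hθ.1 t))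
        (mul_nonneg (le_of_lt hε0) (hδnn t))
    · show ∑ t : Fin (ms+1), ((1-ε) * θ t + ε * δ t) = 1
      rw [Finset.sum_add_distrib, ← Finset.mul_sum, ← Finset.mul_sum, hθ.2, hδsum]
      ring
  have hFF : Gfun mx ms PX θ ≤ F ε := hmin _ hpmf
  rw [hF0] at hlt
  exact absurd hlt (not_lt.mpr hFF)

lemma support_step (hmx : 1 ≤ mx) (PX : Fin (mx+1) → ℝ) (hPX : IsPMF PX)
    (hpos : ∀ x, 0 < PX x) (θ : Fin (ms+1) → ℝ) (hθ : IsPMF θ)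
    (hmin : ∀ θ' : Fin (ms+1) → ℝ, IsPMF θ' → Gfun mx ms PX θ ≤ Gfun mx ms PX θ')
    (t s : Fin (ms+1)) (ht : 0 < θ t)
    (hd1 : ((t:ℕ):ℤ) - ((s:ℕ):ℤ) ≤ (mx:ℤ)) (hd2 : ((s:ℕ):ℤ) - ((t:ℕ):ℤ) ≤ (mx:ℤ)) :
    0 < θ s := by
  by_contra hns
  have hzs : θ s = 0 := le_antisymm (not_lt.mp hns) (hθ.1 s)
  set w0 : ℤ := min ((s:ℕ):ℤ) ((t:ℕ):ℤ) with hw0def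
  have hsl := s.isLt
  have htl := t.isLt
  have hw1 : ((s:ℕ):ℤ) - (mx:ℤ) ≤ w0 := by omega
  have hw2 : w0 ≤ ((s:ℕ):ℤ) := by omega
  set x0 : Fin (mx+1) := ⟨(((t:ℕ):ℤ) - w0).toNat, by omega⟩ with hx0def
  have hteq : ((t:ℕ):ℤ) - ((x0:ℕ):ℤ) = w0 := by
    simp only [hx0def]
    omega
  have hξ : 0 < xiOf mx ms PX θ (((t:ℕ):ℤ) - ((x0:ℕ):ℤ)) :=
    xiOf_pos PX hpos θ hθ.1 x0 t ht
  rw [hteq] at hξ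
  exact not_min_of_zero PX hPX hpos θ hθ s hzs w0 hw1 hw2 hξ hmin

lemma min_full_support (hmx : 1 ≤ mx) (PX : Fin (mx+1) → ℝ) (hPX : IsPMF PX)
    (hpos : ∀ x, 0 < PX x) (θ : Fin (ms+1) → ℝ) (hθ : IsPMF θ)
    (hmin : ∀ θ' : Fin (ms+1) → ℝ, IsPMF θ' → Gfun mx ms PX θ ≤ Gfun mx ms PX θ') :
    ∀ t, 0 < θ t := by
  have hex : ∃ t0 : Fin (ms+1), θ t0 ≠ 0 := by
    by_contra hc
    push_neg at hc
    have : ∑ t, θ t = 0 := Finset.sum_eq_zero (fun t _ => hc t)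
    rw [hθ.2] at this
    norm_num at this
  obtain ⟨t0, ht0⟩ := hex
  have ht0pos : 0 < θ t0 := lt_of_le_of_ne (hθ.1 t0) (Ne.symm ht0)
  have step1 : ∀ (a b : Fin (ms+1)), 0 < θ a →
      ((a:ℕ):ℤ) - ((b:ℕ):ℤ) ≤ 1 → ((b:ℕ):ℤ) - ((a:ℕ):ℤ) ≤ 1 → 0 < θ b := by
    intro a b ha h1 h2
    exact support_step hmx PX hPX hpos θ hθ hmin a b ha (by omega) (by omega)
  -- upward induction
  have up : ∀ j : ℕ, ∀ h : (t0:ℕ) + j ≤ ms, 0 < θ ⟨(t0:ℕ) + j, by omega⟩ := by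
    intro j
    induction j with
    | zero =>
      intro h
      have he : (⟨(t0:ℕ) + 0, by omega⟩ : Fin (ms+1)) = t0 := Fin.ext (by simp)
      rw [he]
      exact ht0pos
    | succ j ih =>
      intro h
      refine step1 ⟨(t0:ℕ) + j, by omega⟩ ⟨(t0:ℕ) + (j+1), by omega⟩ (ih (by omega)) ?_ ?_
      · simp only [Fin.val_mk]; omega
      · simp only [Fin.val_mk]; omega
  -- downward induction
  have down : ∀ j : ℕ, ∀ h : j ≤ (t0:ℕ), 0 < θ ⟨(t0:ℕ) - j, by omega⟩ := by
    intro j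
    induction j with
    | zero =>
      intro h
      have he : (⟨(t0:ℕ) - 0, by omega⟩ : Fin (ms+1)) = t0 := Fin.ext (by simp)
      rw [he]
      exact ht0pos
    | succ j ih =>
      intro h
      refine step1 ⟨(t0:ℕ) - j, by omega⟩ ⟨(t0:ℕ) - (j+1), by omega⟩ (ih (by omega)) ?_ ?_
      · simp only [Fin.val_mk]; omega
      · simp only [Fin.val_mk]; omega
  intro t
  rcases le_total (t0:ℕ) (t:ℕ) with hle | hle
  · have h := up ((t:ℕ) - (t0:ℕ)) (by omega)
    have he : (⟨(t0:ℕ) + ((t:ℕ) - (t0:ℕ)), by omega⟩ : Fin (ms+1)) = t := Fin.ext (by simp only [Fin.val_mk]; omega)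
    rwa [he] at h
  · have h := down ((t0:ℕ) - (t:ℕ)) (by omega)
    have he : (⟨(t0:ℕ) - ((t0:ℕ) - (t:ℕ)), by omega⟩ : Fin (ms+1)) = t := Fin.ext (by simp only [Fin.val_mk]; omega)
    rwa [he] at h

end Aux

/-- If the fully supported pmf `P_X` on `𝒳` is symmetric,
`P_X(x) = P_X(m_x - x)`, then any minimizer `θ*` of `θ ↦ I(S - X; X)` over pmfs on `𝒮`
is symmetric: `θ*(s) = θ*(m_s - s)` for all `s ∈ 𝒮`. -/
theorem minimizer_symmetric (mx ms : ℕ) (hmx : 1 ≤ mx)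
    (PX : Fin (mx + 1) → ℝ) (hPX : IsPMF PX) (hpos : ∀ x, 0 < PX x)
    (hsym : ∀ x : Fin (mx + 1), PX x = PX x.rev)
    (θs : Fin (ms + 1) → ℝ) (hθs : IsPMF θs)
    (hmin : ∀ θ : Fin (ms + 1) → ℝ, IsPMF θ → iidMI mx ms PX θs ≤ iidMI mx ms PX θ) :
    ∀ s : Fin (ms + 1), θs s = θs s.rev := by
  classical
  have hlog2 : (0:ℝ) < Real.log 2 := Real.log_pos one_lt_two
  have hGmin : ∀ θ : Fin (ms+1) → ℝ, IsPMF θ → Gfun mx ms PX θs ≤ Gfun mx ms PX θ := by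
    intro θ hθ'
    have h := hmin θ hθ'
    rw [closed_form PX hPX hpos θs hθs, closed_form PX hPX hpos θ hθ'] at h
    exact (div_le_div_iff_of_pos_right hlog2).mp h
  have hfs0 : ∀ t, 0 < θs t := min_full_support hmx PX hPX hpos θs hθs hGmin
  set θ1 : Fin (ms+1) → ℝ := fun t => θs t.rev with hθ1def
  have hθ1 : IsPMF θ1 := isPMF_rev θs hθs
  have hfs1 : ∀ t, 0 < θ1 t := fun t => hfs0 t.rev
  have hG : Gfun mx ms PX θ1 = Gfun mx ms PX θs := Gfun_rev PX hsym θs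
  have hcross := cross_eq PX hPX hpos θs θ1 hθs hθ1 hfs0 hfs1 hG hGmin
  have hx1 : (1:ℕ) < mx + 1 := by omega
  have key : ∀ k : ℕ, ∀ hk : k ≤ ms,
      θ1 ⟨k, by omega⟩ * θs 0 = θs ⟨k, by omega⟩ * θ1 0 := by
    intro k
    induction k with
    | zero =>
      intro hk
      have he : (⟨0, by omega⟩ : Fin (ms+1)) = 0 := rfl
      rw [he, mul_comm]
    | succ k ih =>
      intro hk
      have hk' : k ≤ ms := by omega
      have E1 := hcross 0 ⟨k, by omega⟩
      have E2 := hcross ⟨1, hx1⟩ ⟨k+1, by omega⟩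
      have hweq : ((((⟨k+1, by omega⟩ : Fin (ms+1)) : ℕ)) : ℤ)
            - (((⟨1, hx1⟩ : Fin (mx+1)) : ℕ) : ℤ)
          = ((((⟨k, by omega⟩ : Fin (ms+1)) : ℕ)) : ℤ) - (((0 : Fin (mx+1)) : ℕ) : ℤ) := by
        simp
      rw [hweq] at E2
      have hξ1pos : 0 < xiOf mx ms PX θ1
          ((((⟨k, by omega⟩ : Fin (ms+1)) : ℕ) : ℤ) - (((0 : Fin (mx+1)) : ℕ) : ℤ)) :=
        xiOf_pos PX hpos θ1 hθ1.1 0 ⟨k, by omega⟩ (hfs1 _)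
      have hz : (θs ⟨k+1, by omega⟩ * θ1 ⟨k, by omega⟩
            - θ1 ⟨k+1, by omega⟩ * θs ⟨k, by omega⟩)
          * xiOf mx ms PX θ1
            ((((⟨k, by omega⟩ : Fin (ms+1)) : ℕ) : ℤ) - (((0 : Fin (mx+1)) : ℕ) : ℤ)) = 0 := by
        linear_combination θ1 ⟨k, by omega⟩ * E2 - θ1 ⟨k+1, by omega⟩ * E1
      have hkey : θs ⟨k+1, by omega⟩ * θ1 ⟨k, by omega⟩
          = θ1 ⟨k+1, by omega⟩ * θs ⟨k, by omega⟩ := by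
        rcases mul_eq_zero.mp hz with h | h
        · exact sub_eq_zero.mp h
        · exact absurd h (ne_of_gt hξ1pos)
      have ihh := ih hk'
      have hθ0k := hfs0 ⟨k, by omega⟩
      have hz2 : (θ1 ⟨k+1, by omega⟩ * θs 0 - θs ⟨k+1, by omega⟩ * θ1 0)
          * θs ⟨k, by omega⟩ = 0 := by
        linear_combination θs ⟨k+1, by omega⟩ * ihh - θs 0 * hkey
      rcases mul_eq_zero.mp hz2 with h | h
      · exact sub_eq_zero.mp h
      · exact absurd h (ne_of_gt hθ0k)
  have hall : ∀ s : Fin (ms+1), θ1 s * θs 0 = θs s * θ1 0 := by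
    intro s
    have h := key (s:ℕ) (by omega)
    have he : (⟨(s:ℕ), by omega⟩ : Fin (ms+1)) = s := Fin.ext rfl
    rwa [he] at h
  have hsum : (∑ s, θ1 s) * θs 0 = (∑ s, θs s) * θ1 0 := by
    rw [Finset.sum_mul, Finset.sum_mul]
    exact Finset.sum_congr rfl (fun s _ => hall s)
  rw [hθ1.2, hθs.2, one_mul, one_mul] at hsum
  intro s
  have h := hall s
  rw [← hsum] at h
  have h00 := hfs0 0
  have hfin := mul_right_cancel₀ (ne_of_gt h00) h
  exact hfin.symm
end SmartMeter
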